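/- Let σ : S → S be a finite-to-one measurable endomorphism of a measure space (S, μ) with μ strongly invariant, i.e., ∫_S (1/D(x)) Σ_{σ(y)=x} f(y) dμ(x) = ∫_S f dμ where D(x) = #{y : σ(y)=x}. Let m be a bounded measurable function on S and define V on L²(μ) by (Vf)(x) = m(x) f(σ(x)). Then the adjoint is (V*f)(x) = (1/D(x)) Σ_{σ(y)=x} m̄(y) f(y). -/

import Mathlib

open MeasureTheory
open scoped ComplexConjugate

/-- Let `σ : S → S` be a measurable, onto, finite-to-one endomorphism of a
σ-finite measure space `(S, μ)` with `μ` strongly invariant, and let `m` be a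
bounded measurable function. For `(Vf)(x) = m(x) f(σ(x))` on `L²(μ)`, the
adjoint is `(V*g)(x) = (1/D(x)) Σ_{σ(y)=x} conj(m(y)) g(y)`, expressed here by
the adjoint identity `⟨Vf, g⟩ = ⟨f, V*g⟩` in `L²(μ)`. -/
theorem adjoint_of_weighted_composition
    {S : Type*} [MeasurableSpace S] (μ : Measure S) [SigmaFinite μ]
    (σ : S → S) (hσm : Measurable σ) (hσonto : Function.Surjective σ)
    (hfin : ∀ x : S, (σ ⁻¹' {x}).Finite)
    -- strong invariance of μ
    (hinv : ∀ f : S → ℂ, Integrable f μ →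
      ∫ x, (1 / (Nat.card (σ ⁻¹' {x}) : ℂ)) * ∑ y ∈ (hfin x).toFinset, f y ∂μ
        = ∫ x, f x ∂μ)
    (m : S → ℂ) (hm : Measurable m) (C : ℝ) (hmb : ∀ x, ‖m x‖ ≤ C)
    (f g : S → ℂ) (hf : MemLp f 2 μ) (hg : MemLp g 2 μ) :
    ∫ x, conj (m x * f (σ x)) * g x ∂μ
      = ∫ x, conj (f x) *
          ((1 / (Nat.card (σ ⁻¹' {x}) : ℂ)) *
            ∑ y ∈ (hfin x).toFinset, conj (m y) * g y) ∂μ := by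
  classical
  -- the fiber cardinality is positive
  have hDpos : ∀ x : S, 0 < Nat.card (σ ⁻¹' {x}) := by
    intro x
    obtain ⟨y, hy⟩ := hσonto x
    have : Nonempty (σ ⁻¹' {x}) := ⟨⟨y, hy⟩⟩
    have : Finite (σ ⁻¹' {x}) := (hfin x).to_subtype
    exact Nat.card_pos
  have hcard : ∀ x : S, (hfin x).toFinset.card = Nat.card (σ ⁻¹' {x}) := fun x =>
    (Nat.card_eq_card_finite_toFinset (hfin x)).symm
  -- the measure of a preimage is at most the measure of the set
  have hpre : ∀ s : Set S, MeasurableSet s → μ (σ ⁻¹' s) ≤ μ s := by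
    intro s hs
    rcases eq_top_or_lt_top (μ s) with htop | hlt
    · simp [htop]
    have hstep : ∀ n : ℕ, μ (σ ⁻¹' s ∩ spanningSets μ n) ≤ μ s := by
      intro n
      set A := σ ⁻¹' s ∩ spanningSets μ n with hA
      have hAm : MeasurableSet A := (hσm hs).inter (measurableSet_spanningSets μ n)
      have hAfin : μ A < ⊤ :=
        lt_of_le_of_lt (measure_mono Set.inter_subset_right)
          (measure_spanningSets_lt_top μ n)
      have hind : Integrable (A.indicator fun _ => (1 : ℂ)) μ :=
        (integrable_indicator_iff hAm).mpr (integrableOn_const hAfin.ne)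
      have key := hinv _ hind
      have hR : ∫ x, A.indicator (fun _ => (1 : ℂ)) x ∂μ = ((μ A).toReal : ℂ) := by
        rw [integral_indicator_const _ hAm]; simp [Measure.real]
      have hbound : ∀ x : S,
          ‖(1 / (Nat.card (σ ⁻¹' {x}) : ℂ)) *
            ∑ y ∈ (hfin x).toFinset, A.indicator (fun _ => (1 : ℂ)) y‖
            ≤ s.indicator (fun _ => (1 : ℝ)) x := by
        intro x
        by_cases hxs : x ∈ s
        · have h1 : ‖∑ y ∈ (hfin x).toFinset, A.indicator (fun _ => (1 : ℂ)) y‖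
              ≤ ((hfin x).toFinset.card : ℝ) := by
            calc ‖∑ y ∈ (hfin x).toFinset, A.indicator (fun _ => (1 : ℂ)) y‖
                ≤ ∑ y ∈ (hfin x).toFinset, ‖A.indicator (fun _ => (1 : ℂ)) y‖ :=
                  norm_sum_le _ _
              _ ≤ ∑ _y ∈ (hfin x).toFinset, (1 : ℝ) := by
                  refine Finset.sum_le_sum fun y _ => ?_
                  by_cases hyA : y ∈ A <;> simp [Set.indicator_apply, hyA]
              _ = ((hfin x).toFinset.card : ℝ) := by simp
          have hD0 : (0 : ℝ) < (Nat.card (σ ⁻¹' {x}) : ℝ) := by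
            exact_mod_cast hDpos x
          rw [norm_mul, Set.indicator_of_mem hxs]
          have h2 : ‖(1 / (Nat.card (σ ⁻¹' {x}) : ℂ))‖
              = 1 / (Nat.card (σ ⁻¹' {x}) : ℝ) := by
            simp
          rw [h2, hcard x] at *
          calc 1 / (Nat.card (σ ⁻¹' {x}) : ℝ) *
              ‖∑ y ∈ (hfin x).toFinset, A.indicator (fun _ => (1 : ℂ)) y‖
              ≤ 1 / (Nat.card (σ ⁻¹' {x}) : ℝ) * (Nat.card (σ ⁻¹' {x}) : ℝ) := by
                apply mul_le_mul_of_nonneg_left _ (by positivity)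
                rw [← hcard x] at h1 ⊢
                exact h1
            _ = 1 := by field_simp
        · have hz : ∀ y ∈ (hfin x).toFinset, A.indicator (fun _ => (1 : ℂ)) y = 0 := by
            intro y hy
            have hyx : σ y = x := by
              simpa [Set.Finite.mem_toFinset] using hy
            apply Set.indicator_of_notMem
            intro hyA
            exact hxs (by simpa [hyx] using hyA.1)
          rw [Finset.sum_eq_zero hz, Set.indicator_of_notMem hxs]
          simp
      have hinds : Integrable (s.indicator fun _ => (1 : ℝ)) μ :=
        (integrable_indicator_iff hs).mpr (integrableOn_const hlt.ne)
      have hnorm : ‖∫ x, (1 / (Nat.card (σ ⁻¹' {x}) : ℂ)) *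
          ∑ y ∈ (hfin x).toFinset, A.indicator (fun _ => (1 : ℂ)) y ∂μ‖
          ≤ (μ s).toReal := by
        calc ‖∫ x, (1 / (Nat.card (σ ⁻¹' {x}) : ℂ)) *
              ∑ y ∈ (hfin x).toFinset, A.indicator (fun _ => (1 : ℂ)) y ∂μ‖
            ≤ ∫ x, ‖(1 / (Nat.card (σ ⁻¹' {x}) : ℂ)) *
              ∑ y ∈ (hfin x).toFinset, A.indicator (fun _ => (1 : ℂ)) y‖ ∂μ :=
              norm_integral_le_integral_norm _
          _ ≤ ∫ x, s.indicator (fun _ => (1 : ℝ)) x ∂μ :=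
              integral_mono_of_nonneg (Filter.Eventually.of_forall fun x => norm_nonneg _)
                hinds (Filter.Eventually.of_forall hbound)
          _ = (μ s).toReal := by rw [integral_indicator_const _ hs]; simp [Measure.real]
      rw [key, hR] at hnorm
      simp only [Complex.norm_real, Real.norm_eq_abs,
        abs_of_nonneg ENNReal.toReal_nonneg] at hnorm
      exact (ENNReal.toReal_le_toReal hAfin.ne hlt.ne).mp (by simpa using hnorm)
    have hun : σ ⁻¹' s = ⋃ n, σ ⁻¹' s ∩ spanningSets μ n := by
      rw [← Set.inter_iUnion, iUnion_spanningSets, Set.inter_univ]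
    rw [hun]
    have hdir : Directed (· ⊆ ·) fun n => σ ⁻¹' s ∩ spanningSets μ n :=
      (Monotone.directed_le fun i j hij =>
        Set.inter_subset_inter_right _ (monotone_spanningSets μ hij))
    rw [hdir.measure_iUnion]
    exact iSup_le hstep
  have hmaple : Measure.map σ μ ≤ μ := by
    refine Measure.le_iff.mpr fun s hs => ?_
    rw [Measure.map_apply hσm hs]
    exact hpre s hs
  -- f ∘ σ is in L²
  have hfσ : MemLp (fun x => f (σ x)) 2 μ := by
    have h1 : MemLp f 2 (Measure.map σ μ) := hf.mono_measure hmaple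
    exact (memLp_map_measure_iff h1.1 hσm.aemeasurable).mp h1
  -- the integrand is integrable
  -- the integrand is integrable
  have hφ : MemLp (fun x => conj (m x * f (σ x))) 2 μ := by
    have hmf : MemLp (fun x => m x * f (σ x)) 2 μ := by
      refine hfσ.of_le_mul (c := C) (hm.aestronglyMeasurable.mul hfσ.1) ?_
      refine Filter.Eventually.of_forall fun x => ?_
      rw [norm_mul]
      exact mul_le_mul_of_nonneg_right (hmb x) (norm_nonneg _)
    refine hmf.of_le_mul (c := 1) (Complex.continuous_conj.comp_aestronglyMeasurable hmf.1) ?_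
    refine Filter.Eventually.of_forall fun x => ?_
    simp
  have hint : Integrable (fun x => conj (m x * f (σ x)) * g x) μ := by
    have : MemLp ((fun x => conj (m x * f (σ x))) • g) 1 μ :=
      haveI : ENNReal.HolderTriple 2 2 1 := ⟨by rw [inv_one]; exact ENNReal.inv_two_add_inv_two⟩
      hg.smul hφ
    have h2 := memLp_one_iff_integrable.mp this
    simpa [Pi.smul_apply, smul_eq_mul, Pi.mul_def] using h2
  have key := hinv _ hint
  rw [← key]
  refine integral_congr_ae (Filter.Eventually.of_forall fun x => ?_)
  have hsum : ∀ y ∈ (hfin x).toFinset,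
      conj (m y * f (σ y)) * g y = conj (f x) * (conj (m y) * g y) := by
    intro y hy
    have hyx : σ y = x := by simpa [Set.Finite.mem_toFinset] using hy
    rw [hyx, map_mul]
    ring
  dsimp only
  rw [Finset.sum_congr rfl hsum, ← Finset.mul_sum]
  ring
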